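/- Under the duality pairing ⟨x^c, λ^d⟩_D = δ_{c,d}·c! (where c! = c_1!···c_n!), the integration operator T_i^∨ defined by (T_i^∨ f)(λ) = ∫_{λ_{i+1}}^{λ_i} f(λ_1,...,λ_{i-1},z,λ_{i+2},...) dz is adjoint to the trimming operator T_i: ⟨T_i g, f⟩_D = ⟨g, T_i^∨ f⟩_D for all polynomials g ∈ ℚ[x_1,x_2,...] and f ∈ ℚ[λ_1,λ_2,...]. -/

import Mathlib

open MvPolynomial

/-- The Bergeron–Sottile map over `ℚ` (1-based `i`): set `x_i = 0` and shift
later variables down by one (`X j` is `x_{j+1}`). -/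
noncomputable def R (i : ℕ) : MvPolynomial ℕ ℚ →ₐ[ℚ] MvPolynomial ℕ ℚ :=
  aeval (fun j => if j + 1 < i then X j else if j + 1 = i then 0 else X (j - 1))

/-- The trimming operator `T i = (R (i+1) g - R i g) / x_i`. -/
noncomputable def T (i : ℕ) (g : MvPolynomial ℕ ℚ) : MvPolynomial ℕ ℚ :=
  (R (i + 1) g - R i g).divMonomial (Finsupp.single (i - 1) 1)

/-- The `D`-pairing `⟨g, f⟩_D = (g(d/dλ_1, d/dλ_2, …) f)(0)`; on monomials,
`⟨x^c, λ^d⟩_D = δ_{c,d} · c!`. -/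
noncomputable def Dpair (g f : MvPolynomial ℕ ℚ) : ℚ :=
  ∑ d ∈ g.support, coeff d g * coeff d f * (d.prod fun _ e => (Nat.factorial e : ℚ))

/-- The integration operator
`(T_i^∨ f)(λ) = ∫_{λ_{i+1}}^{λ_i} f(λ_1,…,λ_{i-1}, z, λ_{i+2},…) dz`
(1-based `i`; `λ_{j+1}` is the variable `X j`).  On a monomial with `z`-slot
exponent `e` the integral contributes `(λ_i^{e+1} - λ_{i+1}^{e+1})/(e+1)`. -/
noncomputable def Tvee (i : ℕ) (f : MvPolynomial ℕ ℚ) : MvPolynomial ℕ ℚ :=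
  ∑ d ∈ f.support,
    C (coeff d f / ((d (i - 1) : ℚ) + 1)) *
      (X (i - 1) ^ (d (i - 1) + 1) - X i ^ (d (i - 1) + 1)) *
      ∏ j ∈ d.support.erase (i - 1), (if j < i - 1 then X j else X (j + 1)) ^ d j

/-! ### Auxiliary machinery -/

section Aux
open Finsupp

/-- The strictly monotone "skip `k`" map. -/
def gb (k : ℕ) : ℕ → ℕ := fun j => if j < k then j else j + 1

lemma gb_inj (k : ℕ) : Function.Injective (gb k) := by
  intro a b h; unfold gb at h; split_ifs at h <;> omega

lemma prod_X_pow (u : ℕ → ℕ) (t : Finset ℕ) (m : ℕ → ℕ) :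
    (∏ j ∈ t, (X (u j) : MvPolynomial ℕ ℚ) ^ m j)
      = monomial (∑ j ∈ t, Finsupp.single (u j) (m j)) 1 := by
  classical
  induction t using Finset.induction with
  | empty => simp [monomial_eq]
  | insert _ _ h ih =>
    rw [Finset.prod_insert h, Finset.sum_insert h, ih, X_pow_eq_monomial,
      monomial_mul, one_mul]

def rho (k : ℕ) : ℕ → ℕ := fun j => if j < k then j else j - 1

lemma rho_gb (k m : ℕ) : rho k (gb k m) = m := by
  unfold rho gb; split_ifs <;> omega

lemma R_monomial (k : ℕ) (c : ℕ →₀ ℕ) (a : ℚ) :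
    _root_.R (k+1) (monomial c a)
      = if c k = 0 then monomial (comapDomain (gb k) c (gb_inj k).injOn) a else 0 := by
  classical
  rw [show _root_.R (k+1) = aeval (fun j => if j + 1 < (k+1) then (X j : MvPolynomial ℕ ℚ)
    else if j + 1 = (k+1) then 0 else X (j - 1)) from rfl, aeval_monomial, Finsupp.prod]
  by_cases h : c k = 0
  · rw [if_pos h]
    have hprod : (∏ j ∈ c.support,
        ((fun n e => (if n + 1 < k + 1 then (X n : MvPolynomial ℕ ℚ)
          else if n + 1 = k+1 then 0 else X (n-1)) ^ e) j (c j)))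
        = ∏ j ∈ c.support, (X (rho k j) : MvPolynomial ℕ ℚ) ^ c j := by
      refine Finset.prod_congr rfl fun j hj => ?_
      have hjk : j ≠ k := fun hk => by
        simp [hk, Finsupp.mem_support_iff, h] at hj
      have h2 : (if j + 1 < k + 1 then (X j : MvPolynomial ℕ ℚ)
          else if j + 1 = k+1 then 0 else X (j-1)) = X (rho k j) := by
        unfold rho; split_ifs <;> first | rfl | omega
      show (if j + 1 < k + 1 then (X j : MvPolynomial ℕ ℚ)
          else if j + 1 = k+1 then 0 else X (j-1)) ^ (c j) = _
      rw [h2]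
    rw [hprod, prod_X_pow]
    have hmap : (∑ j ∈ c.support, Finsupp.single (rho k j) (c j)) = mapDomain (rho k) c := by
      rw [mapDomain, Finsupp.sum]
    have hcm : mapDomain (rho k) c = comapDomain (gb k) c (gb_inj k).injOn := by
      ext m
      rw [comapDomain_apply]
      have hS : (c.support : Set ℕ) ⊆ {j | j ≠ k} := by
        intro j hj; simp only [Set.mem_setOf_eq]
        intro hk; subst hk; exact (Finsupp.mem_support_iff.mp hj) h
      have hInj : Set.InjOn (rho k) {j | j ≠ k} := by
        intro a ha b hb hab; unfold rho at hab
        simp only [Set.mem_setOf_eq] at ha hb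
        split_ifs at hab <;> omega
      have hgm : gb k m ∈ {j | j ≠ k} := by
        simp only [Set.mem_setOf_eq]; unfold gb; split_ifs <;> omega
      conv_lhs => rw [show m = rho k (gb k m) from (rho_gb k m).symm]
      exact mapDomain_apply' {j | j ≠ k} c hS hInj hgm
    rw [hmap, hcm, algebraMap_eq, C_mul_monomial, mul_one]
  · rw [if_neg h]
    have hz : (∏ j ∈ c.support,
        ((fun n e => (if n + 1 < k + 1 then (X n : MvPolynomial ℕ ℚ)
          else if n + 1 = k+1 then 0 else X (n-1)) ^ e) j (c j))) = 0 := by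
      refine Finset.prod_eq_zero (Finsupp.mem_support_iff.mpr h) ?_
      show (if k + 1 < k + 1 then (X k : MvPolynomial ℕ ℚ)
          else if k + 1 = k+1 then 0 else X (k-1)) ^ (c k) = 0
      simp [zero_pow h]
    rw [hz, mul_zero]

lemma Tvee_monomial (k : ℕ) (d : ℕ →₀ ℕ) (b : ℚ) :
    Tvee (k+1) (monomial d b)
      = monomial (Finsupp.single k (d k + 1) + mapDomain (gb k) (d.erase k)) (b / ((d k : ℚ) + 1))
      - monomial (Finsupp.single (k+1) (d k + 1) + mapDomain (gb k) (d.erase k)) (b / ((d k : ℚ) + 1)) := by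
  classical
  by_cases hb : b = 0
  · subst hb
    simp [Tvee, support_monomial]
  rw [Tvee]
  rw [support_monomial, if_neg hb, Finset.sum_singleton]
  simp only [Nat.add_sub_cancel]
  have hc : coeff d (monomial d b) = b := by simp [coeff_monomial]
  rw [hc]
  have hprod : (∏ j ∈ d.support.erase k, (if j < k then (X j : MvPolynomial ℕ ℚ) else X (j + 1)) ^ d j)
      = monomial (mapDomain (gb k) (d.erase k)) 1 := by
    have h1 : (∏ j ∈ d.support.erase k, (if j < k then (X j : MvPolynomial ℕ ℚ) else X (j + 1)) ^ d j)
        = ∏ j ∈ d.support.erase k, (X (gb k j) : MvPolynomial ℕ ℚ) ^ d j := by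
      refine Finset.prod_congr rfl fun j _ => ?_
      unfold gb; split_ifs <;> rfl
    rw [h1, prod_X_pow]
    refine congrArg (fun s => monomial s (1:ℚ)) ?_
    rw [mapDomain, Finsupp.sum, Finsupp.support_erase]
    refine Finset.sum_congr rfl fun j hj => ?_
    rw [Finsupp.erase_ne (Finset.ne_of_mem_erase hj)]
  rw [hprod, X_pow_eq_monomial, X_pow_eq_monomial, mul_sub, sub_mul]
  simp [C_mul_monomial, monomial_mul]

lemma Dpair_eq_sum (g f : MvPolynomial ℕ ℚ) (s : Finset (ℕ →₀ ℕ)) (hs : g.support ⊆ s) :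
    Dpair g f = ∑ d ∈ s, coeff d g * coeff d f * (d.prod fun _ e => (Nat.factorial e : ℚ)) := by
  refine Finset.sum_subset hs fun d _ hd => ?_
  rw [MvPolynomial.notMem_support_iff.mp hd, zero_mul, zero_mul]

lemma Dpair_add_left (p q f : MvPolynomial ℕ ℚ) :
    Dpair (p + q) f = Dpair p f + Dpair q f := by
  classical
  rw [Dpair_eq_sum (p+q) f (p.support ∪ q.support) (MvPolynomial.support_add),
    Dpair_eq_sum p f (p.support ∪ q.support) Finset.subset_union_left,
    Dpair_eq_sum q f (p.support ∪ q.support) Finset.subset_union_right,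
    ← Finset.sum_add_distrib]
  refine Finset.sum_congr rfl fun d _ => ?_
  rw [coeff_add]; ring

lemma Dpair_add_right (g f₁ f₂ : MvPolynomial ℕ ℚ) :
    Dpair g (f₁ + f₂) = Dpair g f₁ + Dpair g f₂ := by
  rw [Dpair, Dpair, Dpair, ← Finset.sum_add_distrib]
  refine Finset.sum_congr rfl fun d _ => ?_
  rw [coeff_add]; ring

lemma Dpair_monomial_left (c : ℕ →₀ ℕ) (a : ℚ) (f : MvPolynomial ℕ ℚ) :
    Dpair (monomial c a) f = a * coeff c f * (c.prod fun _ e => (Nat.factorial e : ℚ)) := by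
  classical
  by_cases ha : a = 0
  · simp [Dpair, support_monomial, ha]
  · rw [Dpair, support_monomial, if_neg ha, Finset.sum_singleton, coeff_monomial, if_pos rfl]

lemma Dpair_monomial_right (p : MvPolynomial ℕ ℚ) (d : ℕ →₀ ℕ) (b : ℚ) :
    Dpair p (monomial d b) = coeff d p * b * (d.prod fun _ e => (Nat.factorial e : ℚ)) := by
  classical
  rw [Dpair, Finset.sum_eq_single d]
  · rw [coeff_monomial, if_pos rfl]
  · intro d' _ hne
    rw [coeff_monomial, if_neg (fun h => hne h.symm), mul_zero, zero_mul]
  · intro hd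
    rw [MvPolynomial.notMem_support_iff.mp hd, zero_mul, zero_mul]

lemma Tvee_eq_sum (i : ℕ) (f : MvPolynomial ℕ ℚ) (s : Finset (ℕ →₀ ℕ)) (hs : f.support ⊆ s) :
    Tvee i f = ∑ d ∈ s,
      C (coeff d f / ((d (i - 1) : ℚ) + 1)) *
        (X (i - 1) ^ (d (i - 1) + 1) - X i ^ (d (i - 1) + 1)) *
        ∏ j ∈ d.support.erase (i - 1), (if j < i - 1 then X j else X (j + 1)) ^ d j := by
  refine Finset.sum_subset hs fun d _ hd => ?_
  rw [MvPolynomial.notMem_support_iff.mp hd, zero_div, map_zero, zero_mul, zero_mul]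

lemma Tvee_add (i : ℕ) (f₁ f₂ : MvPolynomial ℕ ℚ) :
    Tvee i (f₁ + f₂) = Tvee i f₁ + Tvee i f₂ := by
  classical
  rw [Tvee_eq_sum i (f₁+f₂) (f₁.support ∪ f₂.support) (MvPolynomial.support_add),
    Tvee_eq_sum i f₁ (f₁.support ∪ f₂.support) Finset.subset_union_left,
    Tvee_eq_sum i f₂ (f₁.support ∪ f₂.support) Finset.subset_union_right,
    ← Finset.sum_add_distrib]
  refine Finset.sum_congr rfl fun d _ => ?_
  rw [coeff_add, add_div, map_add]; ring

lemma T_add (i : ℕ) (p q : MvPolynomial ℕ ℚ) : T i (p + q) = T i p + T i q := by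
  ext e
  simp only [T, map_add, coeff_divMonomial, coeff_sub, coeff_add]
  ring

lemma qq_apply (k : ℕ) (d : ℕ →₀ ℕ) (m : ℕ) :
    mapDomain (gb k) (d.erase k) m
      = if m < k then d m else if m ≤ k + 1 then 0 else d (m - 1) := by
  classical
  rcases eq_or_ne m k with rfl | hm
  · rw [mapDomain_notin_range]
    · rw [if_neg (by omega), if_pos (by omega)]
    · rintro ⟨j, hj⟩; unfold gb at hj; split_ifs at hj <;> omega
  · have hgb : m = gb k (if m < k then m else m - 1) := by unfold gb; split_ifs <;> omega
    conv_lhs => rw [hgb, mapDomain_apply (gb_inj k)]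
    rcases Nat.lt_or_ge m k with h | h
    · rw [if_pos h, if_pos h, Finsupp.erase_ne (by omega)]
    · rw [if_neg (by omega), if_neg (by omega)]
      rcases Nat.lt_or_ge m (k+2) with h2 | h2
      · rw [if_pos (by omega), show (m-1) = k from by omega, Finsupp.erase_same]
      · rw [if_neg (by omega), Finsupp.erase_ne (by omega)]

lemma claim1 (k : ℕ) (c d : ℕ →₀ ℕ) :
    (c (k+1) = 0 ∧ comapDomain (gb (k+1)) c (gb_inj (k+1)).injOn = Finsupp.single k 1 + d)
    ↔ c = Finsupp.single k (d k + 1) + mapDomain (gb k) (d.erase k) := by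
  classical
  constructor
  · rintro ⟨h0, h1⟩
    have H : ∀ m, c (gb (k+1) m) = (if k = m then 1 else 0) + d m := by
      intro m
      have h2 := Finsupp.ext_iff.mp h1 m
      rwa [comapDomain_apply, Finsupp.add_apply, Finsupp.single_apply] at h2
    have Hlt : ∀ m, m ≤ k → c m = (if k = m then 1 else 0) + d m := by
      intro m hm; have h3 := H m
      rwa [show gb (k+1) m = m from by unfold gb; split_ifs <;> omega] at h3
    have Hgt : ∀ m, m ≥ k+1 → c (m+1) = (if k = m then 1 else 0) + d m := by
      intro m hm; have h3 := H m
      rwa [show gb (k+1) m = m + 1 from by unfold gb; split_ifs <;> omega] at h3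
    ext m
    rw [Finsupp.add_apply, Finsupp.single_apply, qq_apply]
    rcases lt_trichotomy m k with h | heq | h
    · rw [if_neg (by omega), if_pos h]
      have h4 := Hlt m (by omega); rw [if_neg (by omega)] at h4; omega
    · rw [heq, if_pos rfl, if_neg (by omega), if_pos (by omega)]
      have h4 := Hlt k le_rfl; rw [if_pos rfl] at h4; omega
    · rw [if_neg (by omega), if_neg (by omega)]
      rcases Nat.lt_or_ge m (k+2) with h2 | h2
      · rw [if_pos (by omega)]
        have hm : m = k+1 := by omega
        rw [hm]; omega
      · rw [if_neg (by omega)]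
        have h4 := Hgt (m-1) (by omega)
        rw [if_neg (by omega), show m - 1 + 1 = m from by omega] at h4; omega
  · intro h
    have Hc : ∀ m, c m = (if k = m then d k + 1 else 0)
        + (if m < k then d m else if m ≤ k+1 then 0 else d (m-1)) := by
      intro m; have h2 := Finsupp.ext_iff.mp h m
      rwa [Finsupp.add_apply, Finsupp.single_apply, qq_apply] at h2
    have h0 : c (k+1) = 0 := by
      have h2 := Hc (k+1)
      rw [if_neg (by omega), if_neg (by omega), if_pos (by omega)] at h2; omega
    refine ⟨h0, ?_⟩
    ext m
    rw [comapDomain_apply, Finsupp.add_apply, Finsupp.single_apply]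
    rcases lt_trichotomy m k with h' | heq | h'
    · rw [show gb (k+1) m = m from by unfold gb; split_ifs <;> omega, if_neg (by omega)]
      have h2 := Hc m; rw [if_neg (by omega), if_pos h'] at h2; omega
    · rw [heq, show gb (k+1) k = k from by unfold gb; split_ifs <;> omega, if_pos rfl]
      have h2 := Hc k; rw [if_pos rfl, if_neg (by omega), if_pos (by omega)] at h2; omega
    · rw [show gb (k+1) m = m + 1 from by unfold gb; split_ifs <;> omega, if_neg (by omega)]
      have h2 := Hc (m+1)
      rw [if_neg (by omega), if_neg (by omega), if_neg (by omega),
        show m + 1 - 1 = m from rfl] at h2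
      omega

lemma claim2 (k : ℕ) (c d : ℕ →₀ ℕ) :
    (c k = 0 ∧ comapDomain (gb k) c (gb_inj k).injOn = Finsupp.single k 1 + d)
    ↔ c = Finsupp.single (k+1) (d k + 1) + mapDomain (gb k) (d.erase k) := by
  classical
  constructor
  · rintro ⟨h0, h1⟩
    have H : ∀ m, c (gb k m) = (if k = m then 1 else 0) + d m := by
      intro m
      have h2 := Finsupp.ext_iff.mp h1 m
      rwa [comapDomain_apply, Finsupp.add_apply, Finsupp.single_apply] at h2
    have Hlt : ∀ m, m < k → c m = (if k = m then 1 else 0) + d m := by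
      intro m hm; have h3 := H m
      rwa [show gb k m = m from by unfold gb; split_ifs <;> omega] at h3
    have Hge : ∀ m, m ≥ k → c (m+1) = (if k = m then 1 else 0) + d m := by
      intro m hm; have h3 := H m
      rwa [show gb k m = m + 1 from by unfold gb; split_ifs <;> omega] at h3
    ext m
    rw [Finsupp.add_apply, Finsupp.single_apply, qq_apply]
    rcases lt_trichotomy m k with h | heq | h
    · rw [if_neg (by omega), if_pos h]
      have h4 := Hlt m h; rw [if_neg (by omega)] at h4; omega
    · rw [heq, if_neg (by omega), if_neg (by omega), if_pos (by omega)]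
      omega
    · rcases Nat.lt_or_ge m (k+2) with h2 | h2
      · have hm : m = k+1 := by omega
        rw [hm, if_pos rfl, if_neg (by omega), if_pos (by omega)]
        have h4 := Hge k (by omega); rw [if_pos rfl] at h4; omega
      · rw [if_neg (by omega), if_neg (by omega), if_neg (by omega)]
        have h4 := Hge (m-1) (by omega)
        rw [if_neg (by omega), show m - 1 + 1 = m from by omega] at h4; omega
  · intro h
    have Hc : ∀ m, c m = (if k + 1 = m then d k + 1 else 0)
        + (if m < k then d m else if m ≤ k+1 then 0 else d (m-1)) := by
      intro m; have h2 := Finsupp.ext_iff.mp h m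
      rwa [Finsupp.add_apply, Finsupp.single_apply, qq_apply] at h2
    have h0 : c k = 0 := by
      have h2 := Hc k
      rw [if_neg (by omega), if_neg (by omega), if_pos (by omega)] at h2; omega
    refine ⟨h0, ?_⟩
    ext m
    rw [comapDomain_apply, Finsupp.add_apply, Finsupp.single_apply]
    rcases lt_trichotomy m k with h' | heq | h'
    · rw [show gb k m = m from by unfold gb; split_ifs <;> omega, if_neg (by omega)]
      have h2 := Hc m; rw [if_neg (by omega), if_pos h'] at h2; omega
    · rw [heq, show gb k k = k + 1 from by unfold gb; split_ifs <;> omega, if_pos rfl]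
      have h2 := Hc (k+1)
      rw [if_pos rfl, if_neg (by omega), if_pos (by omega)] at h2; omega
    · rw [show gb k m = m + 1 from by unfold gb; split_ifs <;> omega, if_neg (by omega)]
      have h2 := Hc (m+1)
      rw [if_neg (by omega), if_neg (by omega), if_neg (by omega),
        show m + 1 - 1 = m from rfl] at h2
      omega

lemma claim3 (k x : ℕ) (hx : x = k ∨ x = k + 1) (d : ℕ →₀ ℕ) :
    ((Finsupp.single x (d k + 1) + mapDomain (gb k) (d.erase k)).prod
        fun _ e => (e.factorial : ℚ))
      = ((d k : ℚ) + 1) * d.prod (fun _ e => (e.factorial : ℚ)) := by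
  classical
  have hq : mapDomain (gb k) (d.erase k) x = 0 := by
    rcases hx with rfl | rfl <;> rw [qq_apply] <;> simp
  have hdisj : Disjoint (Finsupp.single x (d k + 1)).support
      (mapDomain (gb k) (d.erase k)).support := by
    rw [Finset.disjoint_left]
    intro a ha ha2
    have hax : a = x := Finset.mem_singleton.mp (Finsupp.support_single_subset ha)
    subst hax
    exact (Finsupp.mem_support_iff.mp ha2) hq
  rw [Finsupp.prod_add_index_of_disjoint hdisj,
    Finsupp.prod_single_index (by simp),
    Finsupp.prod_mapDomain_index_inj (gb_inj k)]
  have herase : d.prod (fun _ e => (e.factorial : ℚ))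
      = (d k).factorial * (d.erase k).prod (fun _ e => (e.factorial : ℚ)) :=
    (Finsupp.mul_prod_erase' d k _ (by simp)).symm
  rw [herase, Nat.factorial_succ]
  push_cast
  ring

lemma key (k : ℕ) (c d : ℕ →₀ ℕ) (a b : ℚ) :
    Dpair (T (k+1) (monomial c a)) (monomial d b)
      = Dpair (monomial c a) (Tvee (k+1) (monomial d b)) := by
  classical
  rw [Dpair_monomial_right, Dpair_monomial_left, Tvee_monomial]
  rw [show T (k+1) (monomial c a)
      = ((_root_.R (k+1+1) (monomial c a) - _root_.R (k+1) (monomial c a)).divMonomial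
          (Finsupp.single k 1)) from by rw [T, Nat.add_sub_cancel]]
  rw [coeff_divMonomial, coeff_sub, R_monomial (k+1) c a, R_monomial k c a,
    apply_ite (coeff (Finsupp.single k 1 + d)), apply_ite (coeff (Finsupp.single k 1 + d)),
    coeff_monomial, coeff_monomial, coeff_zero]
  rw [coeff_sub, coeff_monomial, coeff_monomial]
  have E2 : (if c (k+1) = 0 then
      (if comapDomain (gb (k+1)) c (gb_inj (k+1)).injOn = Finsupp.single k 1 + d then a else 0)
      else 0)
      = if c = Finsupp.single k (d k + 1) + mapDomain (gb k) (d.erase k) then a else 0 := by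
    by_cases hA : c = Finsupp.single k (d k + 1) + mapDomain (gb k) (d.erase k)
    · obtain ⟨h0, h1⟩ := (claim1 k c d).mpr hA
      rw [if_pos h0, if_pos h1, if_pos hA]
    · rw [if_neg hA]
      split_ifs with h0 h1
      · exact absurd ((claim1 k c d).mp ⟨h0, h1⟩) hA
      · rfl
      · rfl
  have E1 : (if c k = 0 then
      (if comapDomain (gb k) c (gb_inj k).injOn = Finsupp.single k 1 + d then a else 0)
      else 0)
      = if c = Finsupp.single (k+1) (d k + 1) + mapDomain (gb k) (d.erase k) then a else 0 := by
    by_cases hB : c = Finsupp.single (k+1) (d k + 1) + mapDomain (gb k) (d.erase k)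
    · obtain ⟨h0, h1⟩ := (claim2 k c d).mpr hB
      rw [if_pos h0, if_pos h1, if_pos hB]
    · rw [if_neg hB]
      split_ifs with h0 h1
      · exact absurd ((claim2 k c d).mp ⟨h0, h1⟩) hB
      · rfl
      · rfl
  rw [E2, E1]
  have hx : ((d k : ℚ) + 1) ≠ 0 := by positivity
  by_cases hA : c = Finsupp.single k (d k + 1) + mapDomain (gb k) (d.erase k) <;>
    by_cases hB : c = Finsupp.single (k+1) (d k + 1) + mapDomain (gb k) (d.erase k)
  · exfalso
    have hAB := Finsupp.ext_iff.mp (hA.symm.trans hB) k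
    rw [Finsupp.add_apply, Finsupp.add_apply, Finsupp.single_apply, Finsupp.single_apply,
      if_pos rfl, if_neg (by omega)] at hAB
    omega
  · rw [if_pos hA, if_neg hB, if_pos hA.symm, if_neg (fun h => hB h.symm), hA,
      claim3 k k (Or.inl rfl) d]
    field_simp
    ring
  · rw [if_neg hA, if_pos hB, if_neg (fun h => hA h.symm), if_pos hB.symm, hB,
      claim3 k (k+1) (Or.inr rfl) d]
    field_simp
    ring
  · rw [if_neg hA, if_neg hB, if_neg (fun h => hA h.symm), if_neg (fun h => hB h.symm)]
    ring

end Aux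

/-- The integration operator `T_i^∨` is adjoint to the
trimming operator `T_i` under the `D`-pairing:
`⟨T_i g, f⟩_D = ⟨g, T_i^∨ f⟩_D`. -/
theorem trimming_adjoint (i : ℕ) (hi : 1 ≤ i) (g f : MvPolynomial ℕ ℚ) :
    Dpair (T i g) f = Dpair g (Tvee i f) := by
  obtain ⟨k, rfl⟩ : ∃ k, i = k + 1 := ⟨i - 1, by omega⟩
  induction g using MvPolynomial.induction_on' with
  | monomial c a =>
    induction f using MvPolynomial.induction_on' with
    | monomial d b => exact key k c d a b
    | add p q hp hq => rw [Dpair_add_right, Tvee_add, Dpair_add_right, hp, hq]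
  | add p q hp hq => rw [T_add, Dpair_add_left, Dpair_add_left, hp, hq]
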